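/- Let k ≥ 1, let y_1 ≠ y_2 ∈ ℝ^k, let a_1, a_2 > 0 be positive amplitudes, set m_min = min(a_1, a_2), and assume σ/m_min ≤ 1/2. If (4/Ω) · arcsin((σ/m_min)^{1/2}) ≤ ‖y_1 − y_2‖_2 ≤ π/Ω, then there do not exist â > 0 and ŷ ∈ ℝ^k such that |â e^{i ŷ·ω} − a_1 e^{i y_1·ω} − a_2 e^{i y_2·ω}| < 2σ for all ω ∈ ℝ^k with ‖ω‖_2 ≤ Ω. Consequently, for every image Y(ω) = F[μ](ω) + W(ω) of μ = a_1 δ_{y_1} + a_2 δ_{y_2} with |W(ω)| < σ for ‖ω‖_2 ≤ Ω, there is no positive σ-admissible measure of Y with one support point. -/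

import Mathlib

lemma core_ineq (σ m M a₁ a₂ ah t s : ℝ) (hσ : 0 < σ) (hm : 0 < m) (hmM : m ≤ M)
    (h2σ : 2 * σ ≤ m)
    (hP : a₁ * a₂ = m * M) (hS : a₁ + a₂ = m + M)
    (hs : 4 * (σ/m) * (1 - σ/m) ≤ s^2)
    (ht2 : t^2 = a₁^2 + a₂^2 + 2*a₁*a₂*(1 - 2*s^2))
    (h1 : a₁ + a₂ - 2*σ < ah)
    (h2 : ah - 2*σ < t) : False := by
  have h3 : m + M - 4*σ < t := by linarith
  have h4 : 0 ≤ m + M - 4*σ := by linarith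
  have h5 : (m + M - 4*σ)^2 < t^2 := by nlinarith
  have hsm : 4*σ*(m - σ) ≤ s^2 * m^2 := by
    have hr : σ/m*m = σ := div_mul_cancel₀ _ hm.ne'
    have key : 4*(σ/m)*(1 - σ/m) * m^2 = 4*σ*(m-σ) := by
      linear_combination (4*m - 4*(σ/m)*m - 4*σ) * hr
    nlinarith [mul_le_mul_of_nonneg_right hs (le_of_lt (mul_pos hm hm))]
  have e1 : 4*m*M*s^2 < 8*σ*(m+M) - 16*σ^2 := by nlinarith
  have e2 : 4*σ*(m-σ)*(4*M) ≤ s^2*m^2*(4*M) := by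
    apply mul_le_mul_of_nonneg_right hsm; nlinarith
  have e4 : 16*σ*M*(m-σ) < m*(8*σ*(m+M) - 16*σ^2) := by nlinarith
  nlinarith [mul_nonneg (sub_nonneg.2 hmM) (by linarith : (0:ℝ) ≤ m - 2*σ), mul_pos hσ hm]

/-- **Resolution limit for two positive sources (Theorem 4.3, lower part).**
Let `k ≥ 1`, `y₁ ≠ y₂ ∈ ℝ^k`, `a₁, a₂ > 0`, `m_min = min(a₁, a₂)`, `σ/m_min ≤ 1/2`, and
`(4/Ω) arcsin((σ/m_min)^{1/2}) ≤ ‖y₁ − y₂‖ ≤ π/Ω`.  Then no `â > 0`, `ŷ` satisfy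
`|â e^{i ŷ·ω} − a₁ e^{i y₁·ω} − a₂ e^{i y₂·ω}| < 2σ` for all `‖ω‖ ≤ Ω`; consequently,
for every image `Y = F[μ] + W` with `|W| < σ` on `‖ω‖ ≤ Ω`, there is no positive
σ-admissible measure of `Y` with one support point. -/
theorem positive_two_point_resolution_lower_bound
    (k : ℕ) (hk : 1 ≤ k) (Ω σ : ℝ) (hΩ : 0 < Ω) (hσ : 0 < σ)
    (y₁ y₂ : EuclideanSpace ℝ (Fin k)) (hy : y₁ ≠ y₂)
    (a₁ a₂ : ℝ) (ha₁ : 0 < a₁) (ha₂ : 0 < a₂)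
    (mmin : ℝ) (hmmin : mmin = min a₁ a₂)
    (hratio : σ / mmin ≤ 1 / 2)
    (hsep₁ : 4 / Ω * Real.arcsin (Real.sqrt (σ / mmin)) ≤ ‖y₁ - y₂‖)
    (hsep₂ : ‖y₁ - y₂‖ ≤ Real.pi / Ω) :
    (¬ ∃ (ah : ℝ) (_ : 0 < ah) (yh : EuclideanSpace ℝ (Fin k)),
        ∀ ω : EuclideanSpace ℝ (Fin k), ‖ω‖ ≤ Ω →
          ‖
            ((ah : ℂ) * Complex.exp (Complex.I * ((inner ℝ yh ω : ℝ) : ℂ))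
              - (a₁ : ℂ) * Complex.exp (Complex.I * ((inner ℝ y₁ ω : ℝ) : ℂ))
              - (a₂ : ℂ) * Complex.exp (Complex.I * ((inner ℝ y₂ ω : ℝ) : ℂ)))‖ < 2 * σ) ∧
    (∀ W : EuclideanSpace ℝ (Fin k) → ℂ,
      (∀ ω : EuclideanSpace ℝ (Fin k), ‖ω‖ ≤ Ω → ‖W ω‖ < σ) →
      ¬ ∃ (ah : ℝ) (_ : 0 < ah) (yh : EuclideanSpace ℝ (Fin k)),
          ∀ ω : EuclideanSpace ℝ (Fin k), ‖ω‖ ≤ Ω →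
            ‖
              ((ah : ℂ) * Complex.exp (Complex.I * ((inner ℝ yh ω : ℝ) : ℂ))
                - ((a₁ : ℂ) * Complex.exp (Complex.I * ((inner ℝ y₁ ω : ℝ) : ℂ))
                  + (a₂ : ℂ) * Complex.exp (Complex.I * ((inner ℝ y₂ ω : ℝ) : ℂ))
                  + W ω))‖ < σ) := by
  have hm : 0 < mmin := by rw [hmmin]; exact lt_min ha₁ ha₂
  have h2σ : 2 * σ ≤ mmin := by
    rw [div_le_div_iff₀ hm (by norm_num : (0:ℝ) < 2)] at hratio
    linarith
  have hd0 : 0 < ‖y₁ - y₂‖ := norm_pos_iff.mpr (sub_ne_zero.mpr hy)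
  set d := ‖y₁ - y₂‖ with hd
  have hr0 : 0 ≤ σ / mmin := by positivity
  have hr1 : σ / mmin ≤ 1 / 2 := hratio
  set θ := Real.arcsin (Real.sqrt (σ / mmin)) with hθdef
  have hθ0 : 0 ≤ θ := Real.arcsin_nonneg.mpr (Real.sqrt_nonneg _)
  have h4θ : 4 * θ ≤ Ω * d := by
    have := mul_le_mul_of_nonneg_left hsep₁ hΩ.le
    have h' : Ω * (4 / Ω * θ) = 4 * θ := by field_simp
    linarith [h'.symm.trans_le this]
  have hπ : Ω * d ≤ Real.pi := by
    have := mul_le_mul_of_nonneg_left hsep₂ hΩ.le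
    have h' : Ω * (Real.pi / Ω) = Real.pi := by field_simp
    linarith [this.trans_eq h']
  -- the crucial sine lower bound
  have hsθ : Real.sin θ = Real.sqrt (σ / mmin) :=
    Real.sin_arcsin (by linarith [Real.sqrt_nonneg (σ/mmin)]) (Real.sqrt_le_one.mpr (by linarith))
  have hcθ : Real.cos θ = Real.sqrt (1 - σ / mmin) := by
    rw [hθdef, Real.cos_arcsin, Real.sq_sqrt hr0]
  have hx2 : Ω * d / 2 ≤ Real.pi / 2 := by linarith
  have hmono : Real.sin (2 * θ) ≤ Real.sin (Ω * d / 2) := by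
    rcases eq_or_lt_of_le (show 2*θ ≤ Ω*d/2 by linarith) with h | h
    · rw [h]
    · exact le_of_lt (Real.strictMonoOn_sin
        ⟨by linarith [Real.pi_pos], by linarith⟩
        ⟨by linarith [Real.pi_pos], hx2⟩ h)
  have h2θval : Real.sin (2*θ) = 2 * Real.sqrt (σ/mmin) * Real.sqrt (1 - σ/mmin) := by
    rw [Real.sin_two_mul, hsθ, hcθ]
  have h2θ0 : 0 ≤ Real.sin (2*θ) := by rw [h2θval]; positivity
  have hs2 : 4 * (σ/mmin) * (1 - σ/mmin) ≤ (Real.sin (Ω * d / 2))^2 := by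
    have hsq : (Real.sin (2*θ))^2 = 4 * (σ/mmin) * (1 - σ/mmin) := by
      rw [h2θval, mul_pow, mul_pow, Real.sq_sqrt hr0, Real.sq_sqrt (by linarith)]
      ring
    calc 4 * (σ/mmin) * (1 - σ/mmin) = (Real.sin (2*θ))^2 := hsq.symm
      _ ≤ (Real.sin (Ω * d / 2))^2 := by
          apply pow_le_pow_left₀ h2θ0 hmono
  -- min/max facts
  have hP : a₁ * a₂ = mmin * max a₁ a₂ := by rw [hmmin, min_mul_max]
  have hS : a₁ + a₂ = mmin + max a₁ a₂ := by rw [hmmin, min_add_max]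
  have hmM : mmin ≤ max a₁ a₂ := by rw [hmmin]; exact min_le_max
  -- main nonexistence statement
  have hmain : ¬ ∃ (ah : ℝ) (_ : 0 < ah) (yh : EuclideanSpace ℝ (Fin k)),
      ∀ ω : EuclideanSpace ℝ (Fin k), ‖ω‖ ≤ Ω →
        ‖
          ((ah : ℂ) * Complex.exp (Complex.I * ((inner ℝ yh ω : ℝ) : ℂ))
            - (a₁ : ℂ) * Complex.exp (Complex.I * ((inner ℝ y₁ ω : ℝ) : ℂ))
            - (a₂ : ℂ) * Complex.exp (Complex.I * ((inner ℝ y₂ ω : ℝ) : ℂ)))‖ < 2 * σ := by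
    rintro ⟨ah, hah, yh, H⟩
    -- evaluation at ω = 0
    have H0 := H 0 (by simp [hΩ.le])
    rw [show ((inner ℝ yh (0 : EuclideanSpace ℝ (Fin k)) : ℝ) : ℂ) = 0 by
          simp [inner_zero_right],
        show ((inner ℝ y₁ (0 : EuclideanSpace ℝ (Fin k)) : ℝ) : ℂ) = 0 by
          simp [inner_zero_right],
        show ((inner ℝ y₂ (0 : EuclideanSpace ℝ (Fin k)) : ℝ) : ℂ) = 0 by
          simp [inner_zero_right]] at H0
    simp only [mul_zero, Complex.exp_zero, mul_one] at H0
    rw [show (ah : ℂ) - a₁ - a₂ = ((ah - a₁ - a₂ : ℝ) : ℂ) by push_cast; ring,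
        Complex.norm_real, Real.norm_eq_abs] at H0
    have hA : a₁ + a₂ - 2*σ < ah := by
      rcases abs_lt.mp H0 with ⟨h1, h2⟩; linarith
    -- evaluation at ω = (Ω/d) • (y₁ - y₂)
    set ω : EuclideanSpace ℝ (Fin k) := (Ω / d) • (y₁ - y₂) with hω
    have hnorm : ‖ω‖ ≤ Ω := by
      rw [hω, norm_smul, Real.norm_eq_abs, abs_of_pos (div_pos hΩ hd0), ← hd,
        div_mul_cancel₀ _ hd0.ne']
    have hip : (inner ℝ y₁ ω : ℝ) - (inner ℝ y₂ ω : ℝ) = Ω * d := by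
      rw [hω, real_inner_smul_right, real_inner_smul_right, ← mul_sub,
        ← inner_sub_left, real_inner_self_eq_norm_sq, ← hd]
      field_simp
    have HΩ := H ω hnorm
    set α := (inner ℝ y₁ ω : ℝ) with hα
    set β := (inner ℝ y₂ ω : ℝ) with hβ
    set φ := (inner ℝ yh ω : ℝ) with hφ
    set Z : ℂ := (a₁ : ℂ) * Complex.exp (Complex.I * (α : ℂ))
        + (a₂ : ℂ) * Complex.exp (Complex.I * (β : ℂ)) with hZ
    set E : ℂ := (ah : ℂ) * Complex.exp (Complex.I * (φ : ℂ)) with hE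
    have hEZ : (ah : ℂ) * Complex.exp (Complex.I * (φ : ℂ))
        - (a₁ : ℂ) * Complex.exp (Complex.I * (α : ℂ))
        - (a₂ : ℂ) * Complex.exp (Complex.I * (β : ℂ)) = E - Z := by
      rw [hE, hZ]; ring
    rw [hEZ] at HΩ
    have hEabs : ‖E‖ = ah := by
      rw [hE, norm_mul, Complex.norm_real, Real.norm_eq_abs, abs_of_pos hah, Complex.norm_exp]
      simp
    have hlow : ah - 2*σ < ‖Z‖ := by
      have h1 : ‖E‖ ≤ ‖E - Z‖ + ‖Z‖ := by
        calc ‖E‖ = ‖(E - Z) + Z‖ := by ring_nf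
          _ ≤ ‖E - Z‖ + ‖Z‖ := norm_add_le _ _
      rw [hEabs] at h1
      linarith
    -- compute |Z|²
    have hZeq : Z = ((a₁ * Real.cos α + a₂ * Real.cos β : ℝ) : ℂ)
        + ((a₁ * Real.sin α + a₂ * Real.sin β : ℝ) : ℂ) * Complex.I := by
      rw [hZ, mul_comm Complex.I ((α : ℝ) : ℂ), mul_comm Complex.I ((β : ℝ) : ℂ),
        Complex.exp_mul_I, Complex.exp_mul_I, ← Complex.ofReal_cos,
        ← Complex.ofReal_sin, ← Complex.ofReal_cos, ← Complex.ofReal_sin]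
      push_cast
      ring
    have hZ2 : (‖Z‖)^2
        = a₁^2 + a₂^2 + 2*a₁*a₂*(1 - 2*(Real.sin (Ω * d / 2))^2) := by
      rw [Complex.sq_norm, hZeq, Complex.normSq_add_mul_I]
      have hcosd : Real.cos (α - β) = 1 - 2*(Real.sin (Ω * d / 2))^2 := by
        have hc2 := Real.cos_two_mul (Ω * d / 2)
        have hpy := Real.sin_sq_add_cos_sq (Ω * d / 2)
        rw [show 2 * (Ω * d / 2) = Ω * d by ring] at hc2
        rw [hip]
        linarith
      rw [Real.cos_sub] at hcosd
      linear_combination a₁^2 * (Real.sin_sq_add_cos_sq α)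
        + a₂^2 * (Real.sin_sq_add_cos_sq β) + 2*a₁*a₂ * hcosd
    exact core_ineq σ mmin (max a₁ a₂) a₁ a₂ ah (‖Z‖)
      (Real.sin (Ω * d / 2)) hσ hm hmM h2σ hP hS hs2 hZ2 hA hlow
  refine ⟨hmain, ?_⟩
  intro W hW
  rintro ⟨ah, hah, yh, H⟩
  refine hmain ⟨ah, hah, yh, fun ω hω => ?_⟩
  have h1 := H ω hω
  have h2 := hW ω hω
  have heq : (ah : ℂ) * Complex.exp (Complex.I * ((inner ℝ yh ω : ℝ) : ℂ))
      - (a₁ : ℂ) * Complex.exp (Complex.I * ((inner ℝ y₁ ω : ℝ) : ℂ))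
      - (a₂ : ℂ) * Complex.exp (Complex.I * ((inner ℝ y₂ ω : ℝ) : ℂ))
      = ((ah : ℂ) * Complex.exp (Complex.I * ((inner ℝ yh ω : ℝ) : ℂ))
          - ((a₁ : ℂ) * Complex.exp (Complex.I * ((inner ℝ y₁ ω : ℝ) : ℂ))
            + (a₂ : ℂ) * Complex.exp (Complex.I * ((inner ℝ y₂ ω : ℝ) : ℂ))
            + W ω)) + W ω := by ring
  rw [heq]
  calc ‖_‖ ≤ _ + _ := norm_add_le _ _
    _ < σ + σ := add_lt_add h1 h2
    _ = 2 * σ := by ring
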